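/- Let a ∈ (0,1/2), s ∈ ℝ, and let Φ : ℝ → ℝ be twice continuously differentiable with 0 ≤ Φ(η) ≤ 1 for all η, Φ''(η) + s·Φ'(η) + Φ(η)(1 − Φ(η))(Φ(η) − a) = 0 for all η ∈ ℝ, Φ(η) → 0 as η → −∞ and Φ(η) → 1 as η → +∞. Then necessarily s = √2·(a − 1/2). That is, the wave speed of the bistable travelling front is unique and given by the explicit formula s*(a) = √2(a − 1/2) < 0. -/

import Mathlib

open Filter Topology
open Set

/-- First point (scanning right from `x`) where `f` reaches `b` from below. -/
lemma first_touch {f : ℝ → ℝ} {x y b : ℝ} (hf : Continuous f) (hxy : x < y)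
    (hx : f x < b) (hy : b ≤ f y) :
    ∃ z, x < z ∧ z ≤ y ∧ f z = b ∧ ∀ t, x ≤ t → t < z → f t < b := by
  set S : Set ℝ := {t ∈ Icc x y | b ≤ f t} with hS
  have hSc : IsClosed S := isClosed_Icc.inter (isClosed_le continuous_const hf)
  have hSne : S.Nonempty := ⟨y, ⟨le_of_lt hxy, le_rfl⟩, hy⟩
  have hSbd : BddBelow S := ⟨x, fun t ht => ht.1.1⟩
  set z := sInf S with hz
  have hzS : z ∈ S := hSc.csInf_mem hSne hSbd
  have hzy : z ≤ y := hzS.1.2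
  have hbefore : ∀ t, x ≤ t → t < z → f t < b := by
    intro t hxt htz
    by_contra hcon
    push_neg at hcon
    have : t ∈ S := ⟨⟨hxt, htz.le.trans hzy⟩, hcon⟩
    exact absurd (csInf_le hSbd this) (not_le.mpr htz)
  have hxz : x < z := by
    rcases lt_or_eq_of_le hzS.1.1 with h | h
    · exact h
    · exact absurd (h ▸ hzS.2) (not_le.mpr hx)
  refine ⟨z, hxz, hzy, le_antisymm ?_ hzS.2, hbefore⟩
  have hne : (𝓝[<] z).NeBot := nhdsLT_neBot z
  have hev : ∀ᶠ t in 𝓝[<] z, f t ≤ b := by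
    filter_upwards [Ioo_mem_nhdsLT_of_mem (⟨hxz, le_rfl⟩ : z ∈ Ioc x z)] with t ht
    exact (hbefore t ht.1.le ht.2).le
  exact le_of_tendsto ((hf.continuousAt.tendsto).mono_left nhdsWithin_le_nhds) hev

/-- If `f` is smaller than `f z` just to the right of `z`, the derivative at `z` is `≤ 0`. -/
lemma deriv_nonpos_of_lt_right {f : ℝ → ℝ} {z y d : ℝ} (h : HasDerivAt f d z) (hzy : z < y)
    (hlt : ∀ t, z < t → t ≤ y → f t < f z) : d ≤ 0 := by
  have hs := hasDerivAt_iff_tendsto_slope.mp h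
  have hmono : 𝓝[>] z ≤ 𝓝[≠] z := nhdsWithin_mono _ fun t ht => ne_of_gt ht
  have hne : (𝓝[>] z).NeBot := nhdsGT_neBot z
  refine le_of_tendsto (hs.mono_left hmono) ?_
  filter_upwards [Ioo_mem_nhdsGT_of_mem (⟨le_rfl, hzy⟩ : z ∈ Ico z y)] with t ht
  have hnum : f t - f z < 0 := sub_neg.mpr (hlt t ht.1 ht.2.le)
  rw [slope_def_field]
  exact (div_nonpos_iff.mpr (Or.inr ⟨hnum.le, by linarith [ht.1]⟩))

/-- If `f` is larger than `f z` just to the left of `z`, the derivative at `z` is `≤ 0`. -/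
lemma deriv_nonpos_of_gt_left {f : ℝ → ℝ} {z x d : ℝ} (h : HasDerivAt f d z) (hxz : x < z)
    (hgt : ∀ t, x ≤ t → t < z → f z < f t) : d ≤ 0 := by
  have hs := hasDerivAt_iff_tendsto_slope.mp h
  have hmono : 𝓝[<] z ≤ 𝓝[≠] z := nhdsWithin_mono _ fun t ht => ne_of_lt ht
  have hne : (𝓝[<] z).NeBot := nhdsLT_neBot z
  refine le_of_tendsto (hs.mono_left hmono) ?_
  filter_upwards [Ioo_mem_nhdsLT_of_mem (⟨hxz, le_rfl⟩ : z ∈ Ioc x z)] with t ht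
  have hnum : 0 < f t - f z := sub_pos.mpr (hgt t ht.1.le ht.2)
  rw [slope_def_field]
  exact div_nonpos_iff.mpr (Or.inl ⟨hnum.le, by linarith [ht.2]⟩)

/-- Monotone on `Iic N` from pointwise derivative sign. -/
lemma monoOn_Iic_of_hasDerivAt {f f' : ℝ → ℝ} {N : ℝ}
    (hd : ∀ η ≤ N, HasDerivAt f (f' η) η) (hpos : ∀ η ≤ N, 0 ≤ f' η) :
    MonotoneOn f (Iic N) := by
  apply monotoneOn_of_deriv_nonneg (convex_Iic N)
  · intro x hx; exact (hd x hx).continuousAt.continuousWithinAt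
  · intro x hx
    rw [interior_Iic] at hx
    exact ((hd x hx.le).differentiableAt).differentiableWithinAt
  · intro x hx
    rw [interior_Iic] at hx
    rw [(hd x hx.le).deriv]
    exact hpos x hx.le

lemma antiOn_Iic_of_hasDerivAt {f f' : ℝ → ℝ} {N : ℝ}
    (hd : ∀ η ≤ N, HasDerivAt f (f' η) η) (hneg : ∀ η ≤ N, f' η ≤ 0) :
    AntitoneOn f (Iic N) := by
  apply antitoneOn_of_deriv_nonpos (convex_Iic N)
  · intro x hx; exact (hd x hx).continuousAt.continuousWithinAt
  · intro x hx
    rw [interior_Iic] at hx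
    exact ((hd x hx.le).differentiableAt).differentiableWithinAt
  · intro x hx
    rw [interior_Iic] at hx
    rw [(hd x hx.le).deriv]
    exact hneg x hx.le

/-- Exponential growth backwards contradiction: if `Φ' ≤ c Φ` with `c < 0` on `(-∞, η₃]`,
`0 < Φ ≤ 1` everywhere, contradiction. -/
lemma exp_growth_contra {Φ Φ' : ℝ → ℝ} {η₃ c : ℝ} (hc : c < 0)
    (hpos : ∀ η, 0 < Φ η) (hble : ∀ η, Φ η ≤ 1)
    (hd : ∀ η ≤ η₃, HasDerivAt Φ (Φ' η) η)
    (hineq : ∀ η ≤ η₃, Φ' η ≤ c * Φ η) : False := by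
  set g : ℝ → ℝ := fun η => Φ η * Real.exp (-(c * η)) with hg
  have hgd : ∀ η ≤ η₃, HasDerivAt g ((Φ' η - c * Φ η) * Real.exp (-(c * η))) η := by
    intro η hη
    have he : HasDerivAt (fun η : ℝ => Real.exp (-(c * η))) (-c * Real.exp (-(c * η))) η := by
      have h1 : HasDerivAt (fun η : ℝ => -(c * η)) (-c) η := by
        simpa [Pi.neg_def] using ((hasDerivAt_id η).const_mul c).neg
      simpa [mul_comm, Function.comp_def] using (Real.hasDerivAt_exp (-(c * η))).comp η h1
    have : HasDerivAt (fun η => Φ η * Real.exp (-(c * η))) _ η := (hd η hη).mul he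
    convert this using 1
    ring
  have hanti : AntitoneOn g (Iic η₃) := by
    apply antiOn_Iic_of_hasDerivAt hgd
    intro η hη
    have h1 : Φ' η - c * Φ η ≤ 0 := by linarith [hineq η hη]
    exact mul_nonpos_of_nonpos_of_nonneg h1 (Real.exp_nonneg _)
  -- choose η very negative so that the exponential lower bound exceeds 1
  have hlog : Real.log (Φ η₃) ≤ 0 := Real.log_nonpos (hpos η₃).le (hble η₃)
  have hc0 : c ≠ 0 := ne_of_lt hc
  obtain ⟨η, hηle, hbig⟩ : ∃ η, η ≤ η₃ ∧ 1 - Real.log (Φ η₃) ≤ c * (η - η₃) := by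
    refine ⟨η₃ + (1 - Real.log (Φ η₃)) / c, ?_, ?_⟩
    · have h1 : (0:ℝ) < 1 - Real.log (Φ η₃) := by linarith
      have h2 : (1 - Real.log (Φ η₃)) / c < 0 := div_neg_of_pos_of_neg h1 hc
      linarith
    · have : c * ((η₃ + (1 - Real.log (Φ η₃)) / c) - η₃) = 1 - Real.log (Φ η₃) := by
        field_simp
        ring
      linarith
  have hge := hanti (mem_Iic.mpr hηle) (mem_Iic.mpr (le_refl η₃)) hηle
  -- g η₃ ≤ g η, i.e. Φ η₃ e^{-cη₃} ≤ Φ η e^{-cη}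
  have hexp : Φ η₃ * Real.exp (-(c * η₃)) ≤ Φ η * Real.exp (-(c * η)) := hge
  have hkey : Φ η₃ * Real.exp (c * (η - η₃)) ≤ Φ η := by
    have h3 := mul_le_mul_of_nonneg_right hexp (Real.exp_pos (c * η)).le
    rw [mul_assoc, mul_assoc, ← Real.exp_add, ← Real.exp_add] at h3
    have e1 : -(c*η₃) + c*η = c * (η - η₃) := by ring
    have e2 : -(c*η) + c*η = 0 := by ring
    rw [e1, e2, Real.exp_zero, mul_one] at h3
    exact h3
  have hΦη : Real.exp 1 ≤ Φ η := by
    have h4 : Real.exp (1 - Real.log (Φ η₃)) ≤ Real.exp (c * (η - η₃)) :=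
      Real.exp_le_exp.mpr hbig
    have h5 : Φ η₃ * Real.exp (1 - Real.log (Φ η₃)) = Real.exp 1 := by
      rw [Real.exp_sub, Real.exp_log (hpos η₃), mul_div_assoc']
      rw [mul_comm]
      exact mul_div_cancel_right₀ _ (ne_of_gt (hpos η₃))
    calc Real.exp 1 = Φ η₃ * Real.exp (1 - Real.log (Φ η₃)) := h5.symm
      _ ≤ Φ η₃ * Real.exp (c * (η - η₃)) :=
          mul_le_mul_of_nonneg_left h4 (hpos η₃).le
      _ ≤ Φ η := hkey
  have : (1:ℝ) < Real.exp 1 := by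
    have := Real.add_one_le_exp 1; linarith [Real.exp_pos 1]
  linarith [hble η, hΦη]

/-- Backward Riccati blow-up contradiction: `f ≥ ε > 0` and `f' ≤ -f²/2` on `(-∞, η₀]` is impossible. -/
lemma riccati_blowup_contra {f f' : ℝ → ℝ} {η₀ ε : ℝ} (hε : 0 < ε)
    (hd : ∀ η ≤ η₀, HasDerivAt f (f' η) η)
    (hge : ∀ η ≤ η₀, ε ≤ f η)
    (hineq : ∀ η ≤ η₀, f' η ≤ -(f η)^2 / 2) : False := by
  set g : ℝ → ℝ := fun η => (f η)⁻¹ - η / 2 with hg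
  have hfpos : ∀ η ≤ η₀, 0 < f η := fun η hη => lt_of_lt_of_le hε (hge η hη)
  have hgd : ∀ η ≤ η₀, HasDerivAt g (-(f' η) / (f η)^2 - 1/2) η := by
    intro η hη
    have h1 : HasDerivAt (fun η => (f η)⁻¹) (-(f' η) / (f η)^2) η :=
      (hd η hη).inv (ne_of_gt (hfpos η hη))
    have h2 : HasDerivAt (fun η : ℝ => η / 2) (1/2) η := by
      simpa using (hasDerivAt_id η).div_const 2
    exact h1.sub h2
  have hmono : MonotoneOn g (Iic η₀) := by
    apply monoOn_Iic_of_hasDerivAt hgd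
    intro η hη
    have h2 : (0:ℝ) < (f η)^2 := pow_pos (hfpos η hη) 2
    have : (f η)^2 / 2 ≤ -(f' η) := by linarith [hineq η hη]
    have : ((f η)^2 / 2) / (f η)^2 ≤ -(f' η) / (f η)^2 := by gcongr
    have heq : ((f η)^2 / 2) / (f η)^2 = 1/2 := by field_simp [(hfpos η hη).ne']
    linarith [heq ▸ this]
  set η := η₀ - 2 * (f η₀)⁻¹ - 2 with hηdef
  have hf0 : 0 < (f η₀)⁻¹ := inv_pos.mpr (hfpos η₀ le_rfl)
  have hηle : η ≤ η₀ := by rw [hηdef]; linarith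
  have := hmono (mem_Iic.mpr hηle) (mem_Iic.mpr le_rfl) hηle
  -- (f η)⁻¹ - η/2 ≤ (f η₀)⁻¹ - η₀/2
  have hinv : 0 < (f η)⁻¹ := inv_pos.mpr (hfpos η hηle)
  rw [hg] at this
  simp only [hηdef] at this hinv
  linarith

/-- The positive root of `x² + s x - a = 0` (for `a > 0`). -/
noncomputable def wplus (s a : ℝ) : ℝ := (-s + Real.sqrt (s^2 + 4*a)) / 2

/-- The negative root. -/
noncomputable def wminus (s a : ℝ) : ℝ := (-s - Real.sqrt (s^2 + 4*a)) / 2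

lemma sqrt_disc_gt {s a : ℝ} (ha : 0 < a) : s < Real.sqrt (s^2 + 4*a) := by
  have h1 : |s| ≤ Real.sqrt (s^2 + 4*a) := by
    rw [← Real.sqrt_sq_eq_abs]
    exact Real.sqrt_le_sqrt (by linarith)
  have h2 : Real.sqrt (s^2) < Real.sqrt (s^2 + 4*a) :=
    Real.sqrt_lt_sqrt (sq_nonneg s) (by linarith)
  rw [Real.sqrt_sq_eq_abs] at h2
  exact lt_of_le_of_lt (le_abs_self s) h2

lemma sqrt_disc_gt' {s a : ℝ} (ha : 0 < a) : -s < Real.sqrt (s^2 + 4*a) := by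
  have := @sqrt_disc_gt (-s) a ha
  simpa [neg_sq] using this

lemma wplus_pos {s a : ℝ} (ha : 0 < a) : 0 < wplus s a := by
  have := sqrt_disc_gt (s := s) ha
  unfold wplus; linarith

lemma wminus_neg {s a : ℝ} (ha : 0 < a) : wminus s a < 0 := by
  have := sqrt_disc_gt' (s := s) ha
  unfold wminus; linarith

lemma wplus_add_wminus (s a : ℝ) : wplus s a + wminus s a = -s := by
  unfold wplus wminus; ring

lemma wplus_mul_wminus {s a : ℝ} (ha : 0 ≤ a) : wplus s a * wminus s a = -a := by
  unfold wplus wminus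
  have h : Real.sqrt (s^2 + 4*a) ^ 2 = s^2 + 4*a :=
    Real.sq_sqrt (by positivity)
  nlinarith [h]

/-- Factorization of the Riccati quadratic. -/
lemma quad_factor {s a : ℝ} (ha : 0 ≤ a) (x : ℝ) :
    -x^2 - s*x + a = (wplus s a - x) * (x - wminus s a) := by
  have h1 := wplus_add_wminus s a
  have h2 := wplus_mul_wminus (s := s) ha
  linear_combination (-x) * h1 + h2

/-- `wplus` is the unique positive root. -/
lemma wplus_unique {s a x : ℝ} (ha : 0 < a) (hx : 0 < x) (h : x^2 + s*x - a = 0) :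
    x = wplus s a := by
  have hm : wminus s a < 0 := wminus_neg ha
  have hfac := quad_factor (s := s) ha.le x
  have h0 : (wplus s a - x) * (x - wminus s a) = 0 := by linarith
  rcases mul_eq_zero.mp h0 with h' | h'
  · linarith
  · exfalso; linarith

lemma wplus_strict_anti {s s' a : ℝ} (ha : 0 < a) (hss : s < s') :
    wplus s' a < wplus s a := by
  by_contra hcon
  push_neg at hcon
  have hp := wplus_pos (s := s) ha
  have hp' := wplus_pos (s := s') ha
  have hr : (wplus s a)^2 + s * wplus s a - a = 0 := by
    have := quad_factor (s := s) ha.le (wplus s a); nlinarith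
  have hr' : (wplus s' a)^2 + s' * wplus s' a - a = 0 := by
    have := quad_factor (s := s') ha.le (wplus s' a); nlinarith
  have hwm := wminus_neg (s := s) ha
  have hsum := wplus_add_wminus s a
  have h9 : 0 ≤ (wplus s' a - wplus s a) * (wplus s' a + wplus s a + s) :=
    mul_nonneg (by linarith) (by linarith)
  nlinarith [h9, mul_pos (show (0:ℝ) < s' - s by linarith) hp', hr, hr']

/-- The value of `wplus` at the critical speed. -/
lemma wplus_at_star {a : ℝ} (ha : 0 < a) :
    wplus (Real.sqrt 2 * (a - 1/2)) a = (Real.sqrt 2)⁻¹ := by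
  have h2 : Real.sqrt 2 ^ 2 = 2 := Real.sq_sqrt (by norm_num)
  have h2pos : (0:ℝ) < Real.sqrt 2 := Real.sqrt_pos.mpr (by norm_num)
  have h1 : Real.sqrt 2 * (Real.sqrt 2)⁻¹ = 1 := mul_inv_cancel₀ (ne_of_gt h2pos)
  have hh : ((Real.sqrt 2)⁻¹)^2 = 1/2 := by
    rw [inv_pow, h2]; norm_num
  refine (wplus_unique (x := (Real.sqrt 2)⁻¹) ha (by positivity) ?_).symm
  linear_combination hh + (a - 1/2) * h1

lemma basic_derivs {Φ : ℝ → ℝ} (hΦ : ContDiff ℝ 2 Φ) :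
    (∀ x, HasDerivAt Φ (deriv Φ x) x) ∧ (∀ x, HasDerivAt (deriv Φ) (deriv (deriv Φ) x) x) := by
  have h1 : Differentiable ℝ Φ := hΦ.differentiable (by norm_num)
  have h2 : ContDiff ℝ (1 + 1 : ℕ) Φ := by exact_mod_cast hΦ
  have h3 : ContDiff ℝ (1:ℕ) (deriv Φ) := (contDiff_succ_iff_deriv.mp (by exact_mod_cast h2)).2.2
  have h4 : Differentiable ℝ (deriv Φ) := h3.differentiable (by norm_num)
  exact ⟨fun x => (h1 x).hasDerivAt, fun x => (h4 x).hasDerivAt⟩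

section Riccati

variable {a s : ℝ} {Φ : ℝ → ℝ}

/-- Derivative of the Riccati variable `W = Φ'/Φ`. -/
lemma w_hasDeriv (hΦ : ContDiff ℝ 2 Φ) (hpos : ∀ η, 0 < Φ η)
    (hODE : ∀ η : ℝ,
      deriv (deriv Φ) η + s * deriv Φ η + Φ η * (1 - Φ η) * (Φ η - a) = 0) (η : ℝ) :
    HasDerivAt (fun t => deriv Φ t / Φ t)
      (-(deriv Φ η / Φ η)^2 - s*(deriv Φ η / Φ η) + a - Φ η * (1 + a - Φ η)) η := by
  obtain ⟨hd1, hd2⟩ := basic_derivs hΦ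
  have hu : Φ η ≠ 0 := ne_of_gt (hpos η)
  have h : HasDerivAt (fun t => deriv Φ t / Φ t) _ η := (hd2 η).div (hd1 η) hu
  convert h using 1
  have hk : deriv (deriv Φ) η = -(s * deriv Φ η) - Φ η * (1 - Φ η) * (Φ η - a) := by
    linarith [hODE η]
  rw [hk]
  field_simp
  ring

/-- Upper bound: the Riccati variable `Φ'/Φ` never exceeds the positive root `wplus`. -/
lemma lemLB (ha : 0 < a) (hΦ : ContDiff ℝ 2 Φ) (hpos : ∀ η, 0 < Φ η) (hble : ∀ η, Φ η ≤ 1)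
    (hODE : ∀ η : ℝ,
      deriv (deriv Φ) η + s * deriv Φ η + Φ η * (1 - Φ η) * (Φ η - a) = 0) :
    ∀ η, deriv Φ η / Φ η ≤ wplus s a := by
  set W : ℝ → ℝ := fun t => deriv Φ t / Φ t with hWdef
  set W' : ℝ → ℝ := fun t => -(W t)^2 - s*(W t) + a - Φ t * (1 + a - Φ t) with hW'def
  have hWd : ∀ η, HasDerivAt W (W' η) η := fun η => w_hasDeriv hΦ hpos hODE η
  have hWc : Continuous W := by
    apply Continuous.div
    · exact hΦ.continuous_deriv (by norm_num)
    · exact hΦ.continuous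
    · exact fun x => ne_of_gt (hpos x)
  have herr : ∀ η, W' η ≤ -(W η)^2 - s*(W η) + a := by
    intro η
    have h1 : 0 < Φ η := hpos η
    have h2 : 0 ≤ 1 + a - Φ η := by linarith [hble η]
    have : 0 ≤ Φ η * (1 + a - Φ η) := mul_nonneg h1.le h2
    simp only [hW'def]
    linarith
  have hwp := wplus_pos (s := s) ha
  have hwm := wminus_neg (s := s) ha
  clear_value W W'
  by_contra hcon
  push_neg at hcon
  obtain ⟨η₀, hη₀⟩ := hcon
  have hη₀' : wplus s a < W η₀ := by rw [hWdef]; exact hη₀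
  set ε : ℝ := W η₀ - wplus s a with hεdef
  have hε : 0 < ε := by simp only [hεdef]; linarith
  set b : ℝ := wplus s a + ε/2 with hbdef
  -- value of P at any x ≥ b is ≤ P(b) < 0... we use the factorization pointwise
  have hfac : ∀ x : ℝ, -x^2 - s*x + a = (wplus s a - x) * (x - wminus s a) :=
    quad_factor ha.le
  -- Step 1: W stays ≥ b on (-∞, η₀]
  have hstep1 : ∀ η ≤ η₀, b ≤ W η := by
    intro η₁ hη₁
    by_contra hc1
    push_neg at hc1
    have hη₁lt : η₁ < η₀ := by
      rcases lt_or_eq_of_le hη₁ with h | h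
      · exact h
      · exfalso; rw [h] at hc1; simp only [hbdef, hεdef] at hc1; linarith [hη₀']
    -- scan from the right: apply first_touch to t ↦ -W(-t)
    have hcf : Continuous fun t : ℝ => -W (-t) := (hWc.comp continuous_neg).neg
    have hx : -W (-(-η₀)) < -b := by simp only [neg_neg, hbdef, hεdef]; linarith [hη₀']
    have hy : -b ≤ -W (-(-η₁)) := by simp only [neg_neg]; linarith
    obtain ⟨z', hz'1, hz'2, hz'3, hz'4⟩ :=
      first_touch hcf (by linarith : -η₀ < -η₁) hx hy
    set η₂ : ℝ := -z' with hη₂def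
    have hWη₂ : W η₂ = b := by
      have : -W (-z') = -b := hz'3
      simp only [hη₂def]; linarith [this]
    have hη₂lt : η₂ < η₀ := by simp only [hη₂def]; linarith
    have hafter : ∀ t, η₂ < t → t ≤ η₀ → (fun u => -W u) t < (fun u => -W u) η₂ := by
      intro t h1 h2
      have h3 := hz'4 (-t) (by linarith) (by simp only [hη₂def] at h1; linarith)
      simp only [neg_neg] at h3
      simp only [hWη₂]
      linarith
    have hd0 : -(W' η₂) ≤ 0 := deriv_nonpos_of_lt_right ((hWd η₂).neg) hη₂lt hafter
    have hPb : -(b)^2 - s*b + a < 0 := by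
      rw [hfac b]
      apply mul_neg_of_neg_of_pos
      · simp only [hbdef]; linarith
      · simp only [hbdef]; linarith
    have h5 := herr η₂
    rw [hWη₂] at h5
    linarith
  -- Step 2: Riccati blow-up backwards
  have hK : 0 ≤ wplus s a - wminus s a := by linarith
  have hUd : ∀ η ≤ η₀, HasDerivAt (fun t => W t - wplus s a) (W' η) η :=
    fun η _ => (hWd η).sub_const _
  have hge : ∀ η ≤ η₀, ε/2 ≤ W η - wplus s a := by
    intro η hη
    have := hstep1 η hη
    simp only [hbdef] at this
    linarith
  have hineq : ∀ η ≤ η₀, W' η ≤ -(W η - wplus s a)^2 / 2 := by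
    intro η hη
    have h1 := hge η hη
    have h2 := herr η
    have h3 := hfac (W η)
    have hupos : 0 < W η - wplus s a := by linarith
    have h4 : (wplus s a - W η) * (W η - wminus s a)
        = -(W η - wplus s a)^2 - (W η - wplus s a)*(wplus s a - wminus s a) := by ring
    have h7 : W' η ≤ -(W η - wplus s a)^2 - (W η - wplus s a) * (wplus s a - wminus s a) := by
      rw [← h4, ← h3]; exact h2
    have h8 : 0 ≤ (W η - wplus s a) * (wplus s a - wminus s a) := mul_nonneg hupos.le hK
    have h9 : 0 ≤ (W η - wplus s a)^2 := sq_nonneg _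
    linarith
  exact riccati_blowup_contra (by linarith : (0:ℝ) < ε/2) hUd hge hineq

end Riccati

section RiccatiLower

variable {a s : ℝ} {Φ : ℝ → ℝ}

/-- Lower bound near `-∞`: the Riccati variable `Φ'/Φ` eventually exceeds `wplus - ε`. -/
lemma lemLA (ha : 0 < a) (ha1 : a < 1) (hΦ : ContDiff ℝ 2 Φ) (hpos : ∀ η, 0 < Φ η) (hble : ∀ η, Φ η ≤ 1)
    (hODE : ∀ η : ℝ,
      deriv (deriv Φ) η + s * deriv Φ η + Φ η * (1 - Φ η) * (Φ η - a) = 0)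
    (hlim0 : Tendsto Φ atBot (𝓝 0)) :
    ∀ ε > 0, ∃ N, ∀ η ≤ N, wplus s a - ε ≤ deriv Φ η / Φ η := by
  have hwp := wplus_pos (s := s) ha
  have hwm := wminus_neg (s := s) ha
  -- it suffices to treat small ε
  suffices H : ∀ ε > 0, ε ≤ (wplus s a - wminus s a)/2 → ε ≤ -(wminus s a)/2 →
      ∃ N, ∀ η ≤ N, wplus s a - ε ≤ deriv Φ η / Φ η by
    intro ε hε
    set ε' : ℝ := min ε (min ((wplus s a - wminus s a)/2) (-(wminus s a)/2)) with hε'def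
    have hε'pos : 0 < ε' := by
      apply lt_min hε
      apply lt_min (by linarith) (by linarith)
    have h1 : ε' ≤ (wplus s a - wminus s a)/2 := le_trans (min_le_right _ _) (min_le_left _ _)
    have h2 : ε' ≤ -(wminus s a)/2 := le_trans (min_le_right _ _) (min_le_right _ _)
    obtain ⟨N, hN⟩ := H ε' hε'pos h1 h2
    refine ⟨N, fun η hη => ?_⟩
    have h3 := hN η hη
    have h4 : ε' ≤ ε := min_le_left _ _
    linarith
  intro ε hε hε1 hε2
  obtain ⟨hder1, hder2⟩ := basic_derivs hΦ
  set W : ℝ → ℝ := fun t => deriv Φ t / Φ t with hWdef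
  set W' : ℝ → ℝ := fun t => -(W t)^2 - s*(W t) + a - Φ t * (1 + a - Φ t) with hW'def
  have hWd : ∀ η, HasDerivAt W (W' η) η := fun η => w_hasDeriv hΦ hpos hODE η
  have hWc : Continuous W := by
    apply Continuous.div
    · exact hΦ.continuous_deriv (by norm_num)
    · exact hΦ.continuous
    · exact fun x => ne_of_gt (hpos x)
  -- the lower error bound:  W' ≥ P(W) - 2Φ
  have herr : ∀ η, -(W η)^2 - s*(W η) + a - 2 * Φ η ≤ W' η := by
    intro η
    have h1 : 0 < Φ η := hpos η
    have h2 : Φ η * (1 + a - Φ η) ≤ 2 * Φ η := by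
      nlinarith [mul_nonneg (hpos η).le (show (0:ℝ) ≤ 1 - a + Φ η by linarith [hpos η])]
    simp only [hW'def]
    linarith
  -- and the relation between W and deriv Φ (before making W opaque)
  have hWrel : ∀ η, deriv Φ η = W η * Φ η := by
    intro η
    simp only [hWdef]
    rw [div_mul_cancel₀ _ (ne_of_gt (hpos η))]
  have hgoal : ∀ η, (wplus s a - ε ≤ deriv Φ η / Φ η) = (wplus s a - ε ≤ W η) := by
    intro η; rw [hWdef]
  clear_value W W'
  simp only [hgoal]
  have hfac : ∀ x : ℝ, -x^2 - s*x + a = (wplus s a - x) * (x - wminus s a) :=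
    quad_factor ha.le
  set c : ℝ := ε * (wplus s a - wminus s a) / 2 with hcdef
  have hc : 0 < c := by
    have : 0 < wplus s a - wminus s a := by linarith
    simp only [hcdef]; positivity
  have hcne : c ≠ 0 := ne_of_gt hc
  clear_value c
  -- the band estimate
  have hband : ∀ x, wminus s a + ε ≤ x → x ≤ wplus s a - ε → c ≤ -x^2 - s*x + a := by
    intro x h1 h2
    have h3 := hfac x
    have h4 : 0 ≤ (x - wminus s a - ε) * (wplus s a - ε - x) :=
      mul_nonneg (by linarith) (by linarith)
    have h5 : (wplus s a - x) * (x - wminus s a)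
        = ε * (wplus s a - wminus s a - ε) + (x - wminus s a - ε) * (wplus s a - ε - x) := by
      ring
    have h6 : ε * (wplus s a - wminus s a - ε) - ε * (wplus s a - wminus s a) / 2
        = ε * ((wplus s a - wminus s a)/2 - ε) := by ring
    have h7 : 0 ≤ ε * ((wplus s a - wminus s a)/2 - ε) := mul_nonneg hε.le (by linarith)
    simp only [hcdef]
    linarith
  -- choose N with Φ ≤ c/4 to the left of N
  have hev : ∀ᶠ η in atBot, Φ η < c/4 := hlim0.eventually (gt_mem_nhds (by linarith))
  obtain ⟨N, hN⟩ := eventually_atBot.mp hev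
  refine ⟨N, fun η₀ hη₀N => ?_⟩
  by_contra hcon
  push_neg at hcon
  -- Step 1: W < wplus - ε on all of (-∞, η₀]
  have hstep1 : ∀ η ≤ η₀, W η < wplus s a - ε := by
    intro η₁ hη₁
    by_contra hc1
    push_neg at hc1
    have hη₁lt : η₁ < η₀ := by
      rcases lt_or_eq_of_le hη₁ with h | h
      · exact h
      · exfalso; rw [h] at hc1; linarith
    have hcf : Continuous fun t : ℝ => W (-t) := hWc.comp continuous_neg
    obtain ⟨z', hz'1, hz'2, hz'3, hz'4⟩ :=
      first_touch (f := fun t : ℝ => W (-t)) (b := wplus s a - ε) hcf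
        (by linarith : -η₀ < -η₁) (by simpa using hcon) (by simpa using hc1)
    set η₂ : ℝ := -z' with hη₂def
    have hWη₂ : W η₂ = wplus s a - ε := hz'3
    have hη₂lt : η₂ < η₀ := by simp only [hη₂def]; linarith
    have hη₂le : η₂ ≤ N := by linarith
    have hafter : ∀ t, η₂ < t → t ≤ η₀ → W t < W η₂ := by
      intro t h1 h2
      have h3 := hz'4 (-t) (by linarith) (by simp only [hη₂def] at h1; linarith)
      simp only [neg_neg] at h3
      rw [hWη₂]; exact h3
    have hd0 : W' η₂ ≤ 0 := deriv_nonpos_of_lt_right (hWd η₂) hη₂lt hafter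
    have hb1 : c ≤ -(W η₂)^2 - s*(W η₂) + a := by
      rw [hWη₂]
      exact hband _ (by linarith) le_rfl
    have hΦ2 : Φ η₂ < c/4 := hN η₂ hη₂le
    have := herr η₂
    linarith
  -- Step 2: W must descend below wminus + ε somewhere on (-∞, η₀]
  have hstep2 : ∃ η₃ ≤ η₀, W η₃ ≤ wminus s a + ε := by
    by_contra hc2
    push_neg at hc2
    have hrate : ∀ η ≤ η₀, c/2 ≤ W' η := by
      intro η hη
      have h1 := hstep1 η hη
      have h2 := hc2 η hη
      have h3 := hband (W η) (by linarith) (by linarith)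
      have h4 := herr η
      have h5 : Φ η < c/4 := hN η (by linarith)
      linarith
    have hmono : MonotoneOn (fun η => W η - (c/2) * η) (Iic η₀) := by
      apply monoOn_Iic_of_hasDerivAt (f' := fun η => W' η - c/2)
      · intro η _
        have h1 : HasDerivAt (fun y : ℝ => (c/2) * y) (c/2) η := by
          simpa using (hasDerivAt_id η).const_mul (c/2)
        exact (hWd η).sub h1
      · intro η hη; linarith [hrate η hη]
    set T : ℝ := (W η₀ - wminus s a - ε) / (c/2) + 1 with hTdef
    clear_value T
    have hTpos : 0 < T := by
      have h6 := hc2 η₀ le_rfl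
      have : 0 < (W η₀ - wminus s a - ε) / (c/2) := div_pos (by linarith) (by linarith)
      linarith
    have hTle : η₀ - T ≤ η₀ := by linarith
    have h7 := hmono (mem_Iic.mpr hTle) (mem_Iic.mpr le_rfl) hTle
    simp only at h7
    have h8 : (c/2) * T = W η₀ - wminus s a - ε + c/2 := by
      rw [hTdef]
      field_simp
    have h9 := hc2 (η₀ - T) (by linarith)
    have hdist : c/2*(η₀ - T) = c/2*η₀ - c/2*T := by ring
    linarith [h7, h8, h9, hdist]
  obtain ⟨η₃, hη₃, hWη₃⟩ := hstep2
  -- Step 3: W ≤ wminus + ε on all of (-∞, η₃]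
  have hstep3 : ∀ η ≤ η₃, W η ≤ wminus s a + ε := by
    intro η₄ hη₄
    by_contra hc3
    push_neg at hc3
    have hη₄lt : η₄ < η₃ := by
      rcases lt_or_eq_of_le hη₄ with h | h
      · exact h
      · exfalso; rw [h] at hc3; linarith
    obtain ⟨z, hz1, hz2, hz3, hz4⟩ :=
      first_touch (f := fun t => -W t) (b := -(wminus s a + ε)) hWc.neg hη₄lt
        (by linarith) (by linarith)
    have hWz : W z = wminus s a + ε := by
      have : -W z = -(wminus s a + ε) := hz3
      linarith
    have hbefore : ∀ t, η₄ ≤ t → t < z → W z < W t := by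
      intro t h1 h2
      have h3 := hz4 t h1 h2
      rw [hWz]; linarith
    have hd0 : W' z ≤ 0 := deriv_nonpos_of_gt_left (hWd z) hz1 hbefore
    have hb1 : c ≤ -(W z)^2 - s*(W z) + a := by
      rw [hWz]
      exact hband _ le_rfl (by linarith)
    have hΦz : Φ z < c/4 := hN z (by linarith)
    have := herr z
    linarith
  -- Step 4: exponential growth backwards contradicts boundedness
  have hcneg : wminus s a + ε < 0 := by linarith
  apply exp_growth_contra (Φ := Φ) (Φ' := deriv Φ) (η₃ := η₃) hcneg hpos hble
    (fun η _ => hder1 η)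
  intro η hη
  rw [hWrel η]
  exact mul_le_mul_of_nonneg_right (hstep3 η hη) (hpos η).le

end RiccatiLower

/-- If `E' ≤ C E`, `E ≥ 0`, and `E η₀ = 0`, then `E = 0` to the right of `η₀`. -/
lemma decay_zero {E E' : ℝ → ℝ} {C η₀ : ℝ} (hd : ∀ η, HasDerivAt E (E' η) η)
    (hineq : ∀ η, E' η ≤ C * E η) (hE0 : E η₀ = 0) (hEnn : ∀ η, 0 ≤ E η) :
    ∀ η ≥ η₀, E η = 0 := by
  set g : ℝ → ℝ := fun η => E η * Real.exp (-(C * η)) with hg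
  have hgd : ∀ η, HasDerivAt g ((E' η - C * E η) * Real.exp (-(C * η))) η := by
    intro η
    have he : HasDerivAt (fun η : ℝ => Real.exp (-(C * η))) (-C * Real.exp (-(C * η))) η := by
      have h1 : HasDerivAt (fun η : ℝ => -(C * η)) (-C) η := by
        simpa [Pi.neg_def] using ((hasDerivAt_id η).const_mul C).neg
      simpa [mul_comm, Function.comp_def] using (Real.hasDerivAt_exp (-(C * η))).comp η h1
    have : HasDerivAt (fun η => E η * Real.exp (-(C * η))) _ η := (hd η).mul he
    convert this using 1
    ring
  have hanti : Antitone g := by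
    apply antitone_of_deriv_nonpos
    · exact fun η => ((hgd η).differentiableAt)
    · intro η
      rw [(hgd η).deriv]
      exact mul_nonpos_of_nonpos_of_nonneg (by linarith [hineq η]) (Real.exp_nonneg _)
  intro η hη
  have h1 : g η ≤ g η₀ := hanti hη
  have h2 : g η₀ = 0 := by simp only [hg, hE0, zero_mul]
  have h3 : 0 ≤ E η := hEnn η
  have h4 : 0 < Real.exp (-(C * η)) := Real.exp_pos _
  have h5 : E η * Real.exp (-(C * η)) ≤ 0 := by
    have h2' : E η₀ * Real.exp (-(C * η₀)) = 0 := by rw [hE0]; ring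
    simp only [hg] at h1
    linarith [h1, h2']
  nlinarith [h3, h4, h5]

/-- Strict positivity of a solution that is `≥ 0`, given `Φ → 1` at `+∞`. -/
lemma strict_pos {a s : ℝ} {Φ : ℝ → ℝ} (ha : 0 < a) (ha1 : a < 1) (hΦ : ContDiff ℝ 2 Φ)
    (hrange : ∀ η : ℝ, 0 ≤ Φ η ∧ Φ η ≤ 1)
    (hODE : ∀ η : ℝ,
      deriv (deriv Φ) η + s * deriv Φ η + Φ η * (1 - Φ η) * (Φ η - a) = 0)
    (hlim1 : Tendsto Φ atTop (𝓝 1)) : ∀ η, 0 < Φ η := by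
  obtain ⟨hder1, hder2⟩ := basic_derivs hΦ
  by_contra hcon
  push_neg at hcon
  obtain ⟨η₀, hη₀⟩ := hcon
  have hΦ0 : Φ η₀ = 0 := le_antisymm hη₀ (hrange η₀).1
  have hmin : IsLocalMin Φ η₀ := by
    apply Filter.Eventually.of_forall
    intro η
    rw [hΦ0]
    exact (hrange η).1
  have hd0 : deriv Φ η₀ = 0 := hmin.deriv_eq_zero
  -- the energy
  set E : ℝ → ℝ := fun η => (Φ η)^2 + (deriv Φ η)^2 with hE
  set E' : ℝ → ℝ := fun η =>
    2 * Φ η * deriv Φ η + 2 * deriv Φ η * deriv (deriv Φ) η with hE'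
  have hEd : ∀ η, HasDerivAt E (E' η) η := by
    intro η
    have h1 : HasDerivAt (fun η => (Φ η)^2) (2 * Φ η * deriv Φ η) η := by
      simpa [Pi.pow_def] using (hder1 η).pow 2
    have h2 : HasDerivAt (fun η => (deriv Φ η)^2) (2 * deriv Φ η * deriv (deriv Φ) η) η := by
      simpa [Pi.pow_def] using (hder2 η).pow 2
    exact h1.add h2
  have hEineq : ∀ η, E' η ≤ (2 + 2*|s|) * E η := by
    intro η
    obtain ⟨h0, h1⟩ := hrange η
    have hf2 : (Φ η * (1 - Φ η) * (Φ η - a))^2 ≤ (Φ η)^2 := by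
      have e1 : (1 - Φ η)^2 ≤ 1 := by nlinarith
      have e2 : (Φ η - a)^2 ≤ 1 := by nlinarith
      have e3 : (1 - Φ η)^2 * (Φ η - a)^2 ≤ 1 := by nlinarith [sq_nonneg (1 - Φ η), sq_nonneg (Φ η - a)]
      have e4 : (Φ η * (1 - Φ η) * (Φ η - a))^2 = (Φ η)^2 * ((1 - Φ η)^2 * (Φ η - a)^2) := by
        ring
      rw [e4]
      nlinarith [sq_nonneg (Φ η), e3]
    have hsd : deriv (deriv Φ) η = -(s * deriv Φ η) - Φ η * (1 - Φ η) * (Φ η - a) := by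
      linarith [hODE η]
    simp only [hE, hE']
    rw [hsd]
    have habs1 : s ≤ |s| := le_abs_self s
    have habs2 : -s ≤ |s| := neg_le_abs s
    nlinarith [sq_nonneg (Φ η - deriv Φ η), sq_nonneg (deriv Φ η + Φ η * (1 - Φ η) * (Φ η - a)),
      hf2, mul_nonneg (show (0:ℝ) ≤ |s| + s by linarith) (sq_nonneg (deriv Φ η)),
      mul_nonneg (show (0:ℝ) ≤ |s| - s by linarith) (sq_nonneg (deriv Φ η))]
  have hE0 : E η₀ = 0 := by simp only [hE, hΦ0, hd0]; ring
  have hEnn : ∀ η, 0 ≤ E η := fun η => by positivity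
  have hzero := decay_zero hEd hEineq hE0 hEnn
  -- Φ vanishes on [η₀, ∞), contradicting the limit 1 at +∞
  have hΦzero : ∀ η ≥ η₀, Φ η = 0 := by
    intro η hη
    have h1 := hzero η hη
    simp only [hE] at h1
    nlinarith [sq_nonneg (Φ η), sq_nonneg (deriv Φ η), (hrange η).1]
  have heq : Φ =ᶠ[atTop] (fun _ => (0:ℝ)) := by
    filter_upwards [eventually_ge_atTop η₀] with η hη
    exact hΦzero η hη
  have : Tendsto Φ atTop (𝓝 0) := Tendsto.congr' heq.symm tendsto_const_nhds
  have h01 : (1:ℝ) = 0 := tendsto_nhds_unique hlim1 this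
  norm_num at h01

/-- Reflection `Ψ(η) = 1 - Φ(-η)` transforms a front with `(a,s)` into one with `(1-a,-s)`. -/
lemma reflect_facts {a s : ℝ} {Φ : ℝ → ℝ} (hΦ : ContDiff ℝ 2 Φ)
    (hODE : ∀ η : ℝ,
      deriv (deriv Φ) η + s * deriv Φ η + Φ η * (1 - Φ η) * (Φ η - a) = 0) :
    ContDiff ℝ 2 (fun η => 1 - Φ (-η)) ∧
    (∀ η, deriv (fun η => 1 - Φ (-η)) η = deriv Φ (-η)) ∧
    (∀ η : ℝ,
      deriv (deriv (fun η => 1 - Φ (-η))) η + (-s) * deriv (fun η => 1 - Φ (-η)) η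
        + (1 - Φ (-η)) * (1 - (1 - Φ (-η))) * ((1 - Φ (-η)) - (1 - a)) = 0) := by
  obtain ⟨hder1, hder2⟩ := basic_derivs hΦ
  have hneg : ContDiff ℝ 2 (fun η : ℝ => -η) := contDiff_neg
  have hcomp : ContDiff ℝ 2 (fun η => Φ (-η)) := hΦ.comp hneg
  have hΨ : ContDiff ℝ 2 (fun η => 1 - Φ (-η)) := contDiff_const.sub hcomp
  have hΨd : ∀ η, HasDerivAt (fun η => 1 - Φ (-η)) (deriv Φ (-η)) η := by
    intro η
    have h1 : HasDerivAt (fun η : ℝ => Φ (-η)) (deriv Φ (-η) * (-1)) η :=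
      (hder1 (-η)).comp η (hasDerivAt_neg η)
    have h2 := h1.const_sub 1
    simpa using h2
  have hΨderiv : deriv (fun η => 1 - Φ (-η)) = fun η => deriv Φ (-η) :=
    funext fun η => (hΨd η).deriv
  have hΨd2 : ∀ η, HasDerivAt (deriv (fun η => 1 - Φ (-η))) (-(deriv (deriv Φ) (-η))) η := by
    intro η
    rw [hΨderiv]
    have h1 : HasDerivAt (fun η : ℝ => deriv Φ (-η)) (deriv (deriv Φ) (-η) * (-1)) η :=
      (hder2 (-η)).comp η (hasDerivAt_neg η)
    simpa using h1
  have hΨderiv2 : ∀ η, deriv (deriv (fun η => 1 - Φ (-η))) η = -(deriv (deriv Φ) (-η)) :=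
    fun η => (hΨd2 η).deriv
  refine ⟨hΨ, fun η => by rw [hΨderiv], fun η => ?_⟩
  rw [hΨderiv2 η, hΨderiv]
  have h3 := hODE (-η)
  ring_nf
  ring_nf at h3
  linarith [h3]

set_option maxHeartbeats 1000000 in
/-- Uniqueness of the bistable front speed: if for `a ∈ (0,1/2)` a `C²`
profile `Φ` with values in `[0,1]` solves `Φ'' + sΦ' + Φ(1−Φ)(Φ−a) = 0` with
`Φ(−∞) = 0` and `Φ(+∞) = 1`, then necessarily `s = √2(a − 1/2)`. -/
theorem bistable_front_speed_unique
    (a : ℝ) (ha : a ∈ Set.Ioo (0 : ℝ) (1/2)) (s : ℝ)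
    (Φ : ℝ → ℝ) (hΦ : ContDiff ℝ 2 Φ)
    (hrange : ∀ η : ℝ, 0 ≤ Φ η ∧ Φ η ≤ 1)
    (hODE : ∀ η : ℝ,
      deriv (deriv Φ) η + s * deriv Φ η + Φ η * (1 - Φ η) * (Φ η - a) = 0)
    (hlim0 : Tendsto Φ atBot (𝓝 0)) (hlim1 : Tendsto Φ atTop (𝓝 1)) :
    s = Real.sqrt 2 * (a - 1/2) := by
  obtain ⟨ha0, hah⟩ := ha
  have ha1 : a < 1 := by linarith
  obtain ⟨hder1, hder2⟩ := basic_derivs hΦ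
  have hbleΦ : ∀ η, Φ η ≤ 1 := fun η => (hrange η).2
  have hpos : ∀ η, 0 < Φ η := strict_pos ha0 ha1 hΦ hrange hODE hlim1
  -- reflection data
  obtain ⟨hΨ, hΨd, hΨODE⟩ := reflect_facts hΦ hODE
  have hrangeΨ : ∀ η : ℝ, 0 ≤ (fun η => 1 - Φ (-η)) η ∧ (fun η => 1 - Φ (-η)) η ≤ 1 := by
    intro η
    constructor
    · simp only; linarith [(hrange (-η)).2]
    · simp only; linarith [(hrange (-η)).1]
  have hbleΨ : ∀ η, (fun η => 1 - Φ (-η)) η ≤ 1 := fun η => (hrangeΨ η).2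
  have hlimΨ1 : Tendsto (fun η => 1 - Φ (-η)) atTop (𝓝 1) := by
    have h := hlim0.comp tendsto_neg_atTop_atBot
    have h2 := (tendsto_const_nhds (x := (1:ℝ)) (f := atTop)).sub h
    simpa using h2
  have hlimΨ0 : Tendsto (fun η => 1 - Φ (-η)) atBot (𝓝 0) := by
    have h := hlim1.comp tendsto_neg_atBot_atTop
    have h2 := (tendsto_const_nhds (x := (1:ℝ)) (f := atBot)).sub h
    simpa using h2
  have hposΨ : ∀ η, 0 < (fun η => 1 - Φ (-η)) η :=
    strict_pos (by linarith) (by linarith) hΨ hrangeΨ hΨODE hlimΨ1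
  have hlt1 : ∀ η, Φ η < 1 := by
    intro η
    have := hposΨ (-η)
    simp only [neg_neg] at this
    linarith
  -- constants
  set k : ℝ := (Real.sqrt 2)⁻¹ with hkdef
  have hs2 : (0:ℝ) < Real.sqrt 2 := Real.sqrt_pos.mpr (by norm_num)
  have hk : 0 < k := by rw [hkdef]; positivity
  have hkk : k * k = 1/2 := by
    rw [hkdef, ← mul_inv, Real.mul_self_sqrt (by norm_num : (0:ℝ) ≤ 2)]
    norm_num
  have hks : Real.sqrt 2 * k = 1 := mul_inv_cancel₀ (ne_of_gt hs2)
  set st : ℝ := Real.sqrt 2 * (a - 1/2) with hstdef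
  have hstk : st * k = a - 1/2 := by
    rw [hstdef]
    linear_combination (a - 1/2) * hks
  have hwpstar : wplus st a = k := by rw [hstdef, hkdef]; exact wplus_at_star ha0
  have hzpstar : wplus (-st) (1-a) = k := by
    have h1 : -st = Real.sqrt 2 * ((1-a) - 1/2) := by rw [hstdef]; ring
    rw [h1, hkdef]
    exact wplus_at_star (by linarith)
  -- the comparison function D and its derivative
  have hDd : ∀ η, HasDerivAt (fun t => deriv Φ t - Φ t * (1 - Φ t) * k)
      (deriv (deriv Φ) η - (deriv Φ η * (1 - Φ η) + Φ η * (-(deriv Φ η))) * k) η := by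
    intro η
    have h1 : HasDerivAt (fun t => Φ t * (1 - Φ t))
        (deriv Φ η * (1 - Φ η) + Φ η * (-(deriv Φ η))) η :=
      (hder1 η).mul ((hder1 η).const_sub 1)
    exact (hder2 η).sub (h1.mul_const k)
  have hDc : Continuous (fun t => deriv Φ t - Φ t * (1 - Φ t) * k) := by
    apply Continuous.sub (hΦ.continuous_deriv (by norm_num))
    exact (hΦ.continuous.mul (continuous_const.sub hΦ.continuous)).mul continuous_const
  -- value of the derivative of D at a zero of D
  have hD'val : ∀ z, deriv Φ z - Φ z * (1 - Φ z) * k = 0 →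
      deriv (deriv Φ) z - (deriv Φ z * (1 - Φ z) + Φ z * (-(deriv Φ z))) * k
        = Φ z * (1 - Φ z) * (a - 1/2 - s*k) := by
    intro z hz
    have hP : deriv Φ z = Φ z * (1 - Φ z) * k := by linarith
    have hk2 : deriv (deriv Φ) z = -(s * deriv Φ z) - Φ z*(1-Φ z)*(Φ z - a) := by
      linarith [hODE z]
    rw [hk2, hP]
    linear_combination (-(Φ z*(1-Φ z))*(1-2*Φ z)) * hkk
  -- trichotomy
  rcases lt_trichotomy s st with hlt | heq | hgt
  · -- s < s*: contradiction
    exfalso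
    have h1 : k < wplus s a := by rw [← hwpstar]; exact wplus_strict_anti ha0 hlt
    obtain ⟨N₁, hN₁⟩ := lemLA ha0 ha1 hΦ hpos hbleΦ hODE hlim0 (wplus s a - k) (by linarith)
    have hW : ∀ η ≤ N₁, k ≤ deriv Φ η / Φ η := by
      intro η hη
      have h2 := hN₁ η hη
      linarith
    have hD1 : 0 < deriv Φ N₁ - Φ N₁ * (1 - Φ N₁) * k := by
      have h2 : k * Φ N₁ ≤ deriv Φ N₁ := (le_div_iff₀ (hpos N₁)).mp (hW N₁ le_rfl)
      nlinarith [mul_pos hk (mul_pos (hpos N₁) (hpos N₁))]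
    -- upper bound on the other Riccati variable
    have hzb := lemLB (show (0:ℝ) < 1-a by linarith) hΨ hposΨ hbleΨ hΨODE
    have hzp_pos : 0 < wplus (-s) (1-a) := wplus_pos (by linarith)
    have hzplt : wplus (-s) (1-a) < k := by
      rw [← hzpstar]
      exact wplus_strict_anti (by linarith) (by linarith)
    have hzΦ : ∀ η, deriv Φ η ≤ wplus (-s) (1-a) * (1 - Φ η) := by
      intro η
      have h3 := hzb (-η)
      have h4 := hΨd (-η)
      rw [neg_neg] at h4
      rw [h4] at h3
      simp only [neg_neg] at h3
      have h5 : 0 < 1 - Φ η := by linarith [hlt1 η]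
      calc deriv Φ η = (deriv Φ η / (1 - Φ η)) * (1 - Φ η) :=
            (div_mul_cancel₀ _ (ne_of_gt h5)).symm
        _ ≤ wplus (-s) (1-a) * (1 - Φ η) := mul_le_mul_of_nonneg_right h3 h5.le
    have hev : ∀ᶠ η in atTop, wplus (-s) (1-a) / k < Φ η :=
      hlim1.eventually (lt_mem_nhds (by rwa [div_lt_one hk]))
    obtain ⟨M, hM⟩ := eventually_atTop.mp hev
    set η₂ : ℝ := max M (N₁ + 1) with hη₂def
    have hη₂gt : N₁ < η₂ := by
      have := le_max_right M (N₁ + 1); simp only [hη₂def]; linarith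
    have hη₂M : M ≤ η₂ := le_max_left _ _
    have hD2 : deriv Φ η₂ - Φ η₂ * (1 - Φ η₂) * k < 0 := by
      have h6 := hM η₂ hη₂M
      have h7 : wplus (-s) (1-a) < Φ η₂ * k := by
        rw [div_lt_iff₀ hk] at h6; linarith
      have h8 := hzΦ η₂
      have h9 : 0 < 1 - Φ η₂ := by linarith [hlt1 η₂]
      nlinarith [mul_pos h9 (sub_pos.mpr h7)]
    obtain ⟨z, hz1, hz2, hz3, hz4⟩ :=
      first_touch (f := fun t => -(deriv Φ t - Φ t * (1 - Φ t) * k)) (b := 0)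
        hDc.neg hη₂gt (by linarith) (by linarith)
    have hDz : deriv Φ z - Φ z * (1 - Φ z) * k = 0 := by
      have := hz3; linarith
    have hgt0 : ∀ t, N₁ ≤ t → t < z →
        (fun t => deriv Φ t - Φ t * (1 - Φ t) * k) z
          < (fun t => deriv Φ t - Φ t * (1 - Φ t) * k) t := by
      intro t h1' h2'
      have h3' := hz4 t h1' h2'
      simp only at h3' ⊢
      rw [hDz]
      linarith
    have hd0 := deriv_nonpos_of_gt_left (hDd z) hz1 hgt0
    rw [hD'val z hDz] at hd0
    have hsk : s * k < a - 1/2 := by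
      calc s * k < st * k := mul_lt_mul_of_pos_right hlt hk
        _ = a - 1/2 := hstk
    have hposval : 0 < Φ z * (1 - Φ z) * (a - 1/2 - s*k) :=
      mul_pos (mul_pos (hpos z) (by linarith [hlt1 z])) (by linarith)
    linarith
  · exact heq
  · -- s > s*: contradiction
    exfalso
    have hwpS : wplus s a < k := by rw [← hwpstar]; exact wplus_strict_anti ha0 hgt
    have hwp_pos : 0 < wplus s a := wplus_pos ha0
    have hwb := lemLB ha0 hΦ hpos hbleΦ hODE
    have hev1 : ∀ᶠ η in atBot, Φ η < 1 - wplus s a / k := by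
      apply hlim0.eventually (gt_mem_nhds ?_)
      have : wplus s a / k < 1 := by rwa [div_lt_one hk]
      linarith
    obtain ⟨M₁, hM₁⟩ := eventually_atBot.mp hev1
    have hD1 : deriv Φ M₁ - Φ M₁ * (1 - Φ M₁) * k < 0 := by
      have h2 : deriv Φ M₁ ≤ wplus s a * Φ M₁ := by
        have h3 := hwb M₁
        calc deriv Φ M₁ = (deriv Φ M₁ / Φ M₁) * Φ M₁ :=
              (div_mul_cancel₀ _ (ne_of_gt (hpos M₁))).symm
          _ ≤ wplus s a * Φ M₁ := mul_le_mul_of_nonneg_right h3 (hpos M₁).le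
      have h4 := hM₁ M₁ le_rfl
      have h5 : wplus s a < (1 - Φ M₁) * k := by
        have h4' : wplus s a / k < 1 - Φ M₁ := by linarith
        exact (div_lt_iff₀ hk).mp h4'
      nlinarith [hpos M₁, mul_pos (hpos M₁) (sub_pos.mpr h5)]
    -- lower bound for the reflected Riccati variable
    have hzgt : k < wplus (-s) (1-a) := by
      rw [← hzpstar]
      exact wplus_strict_anti (by linarith) (by linarith)
    obtain ⟨N₂, hN₂⟩ := lemLA (show (0:ℝ) < 1-a by linarith) (by linarith) hΨ hposΨ hbleΨ
      hΨODE hlimΨ0 (wplus (-s) (1-a) - k) (by linarith)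
    have hzlow : ∀ η, -N₂ ≤ η → k * (1 - Φ η) ≤ deriv Φ η := by
      intro η hη
      have h3 := hN₂ (-η) (by linarith)
      have h4 := hΨd (-η)
      rw [neg_neg] at h4
      rw [h4] at h3
      simp only [neg_neg] at h3
      have h5 : 0 < 1 - Φ η := by linarith [hlt1 η]
      have h6 : k ≤ deriv Φ η / (1 - Φ η) := by linarith
      exact (le_div_iff₀ h5).mp h6
    set η₂ : ℝ := max (-N₂) (M₁ + 1) with hη₂def
    have hη₂gt : M₁ < η₂ := by
      have := le_max_right (-N₂) (M₁ + 1); simp only [hη₂def]; linarith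
    have hη₂N : -N₂ ≤ η₂ := le_max_left _ _
    have hD2 : 0 < deriv Φ η₂ - Φ η₂ * (1 - Φ η₂) * k := by
      have h6 := hzlow η₂ hη₂N
      have h7 : 0 < 1 - Φ η₂ := by linarith [hlt1 η₂]
      nlinarith [mul_pos hk (mul_pos h7 h7)]
    obtain ⟨z, hz1, hz2, hz3, hz4⟩ :=
      first_touch (f := fun t => deriv Φ t - Φ t * (1 - Φ t) * k) (b := 0)
        hDc hη₂gt (by linarith) (by linarith)
    have hDz : deriv Φ z - Φ z * (1 - Φ z) * k = 0 := by
      have := hz3; linarith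
    have hgt0 : ∀ t, M₁ ≤ t → t < z →
        (fun t => -(deriv Φ t - Φ t * (1 - Φ t) * k)) z
          < (fun t => -(deriv Φ t - Φ t * (1 - Φ t) * k)) t := by
      intro t h1' h2'
      have h3' := hz4 t h1' h2'
      simp only at h3' ⊢
      rw [hDz]
      linarith
    have hd0 := deriv_nonpos_of_gt_left ((hDd z).neg) hz1 hgt0
    rw [hD'val z hDz] at hd0
    have hsk : a - 1/2 < s * k := by
      calc a - 1/2 = st * k := hstk.symm
        _ < s * k := mul_lt_mul_of_pos_right hgt hk
    have hnegval : Φ z * (1 - Φ z) * (a - 1/2 - s*k) < 0 := by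
      apply mul_neg_of_pos_of_neg (mul_pos (hpos z) (by linarith [hlt1 z]))
      linarith
    linarith
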